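/- Consider ground terms of combinatory logic over the single constant O and the Owl rule @(@(O,x),y) → @(y,@(x,y)) (O x y → y (x y)). Define a partial interpretation into A = {0,1} by [[O]] = 0, [[@]](0,0) = 1, [[@]](0,1) = 1, [[@]](1,0) = 1, and [[@]](1,1) undefined, extended to ground terms by partial evaluation. Then every ground term t whose interpretation [[t]] is undefined contains a redex, i.e., a subterm of the form @(@(O,t₁),t₂). -/

import Mathlib

namespace Owl

/-- Ground terms of combinatory logic over a set `C` of constants. -/
inductive CL (C : Type) : Type
  | const : C → CL C
  | app : CL C → CL C → CL C

/-- The partial interpretation of application on `A = {0,1}`: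
`(0,0) ↦ 1`, `(0,1) ↦ 1`, `(1,0) ↦ 1`, `(1,1)` undefined. -/
def appI : Fin 2 → Fin 2 → Option (Fin 2) := fun a b =>
  if a = 0 then some 1 else if b = 0 then some 1 else none

/-- Partial evaluation of ground terms: `[[O]] = 0` and
`[[@(t₁,t₂)]] ≃ appI [[t₁]] [[t₂]]`. -/
def evalO : CL Unit → Option (Fin 2)
  | .const _ => some 0
  | .app t u => (evalO t).bind fun a => (evalO u).bind fun b => appI a b

/-- Subterm relation on CL terms. -/
inductive CLSub {C : Type} : CL C → CL C → Prop
  | refl (t : CL C) : CLSub t t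
  | left {s t : CL C} (u : CL C) : CLSub s t → CLSub s (.app t u)
  | right {s t : CL C} (u : CL C) : CLSub s t → CLSub s (.app u t)

lemma appI_ne_zero (a b : Fin 2) : appI a b ≠ some 0 := by
  unfold appI
  fin_cases a <;> fin_cases b <;> simp

lemma eval_zero_const (t : CL Unit) (h : evalO t = some 0) : t = .const () := by
  cases t with
  | const c => cases c; rfl
  | app u v =>
    exfalso
    simp only [evalO, Option.bind_eq_some_iff] at h
    obtain ⟨a, _, b, _, hab⟩ := h
    exact appI_ne_zero a b hab

lemma eval_one (t : CL Unit) (h : evalO t = some 1) :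
    (∃ a, t = .app (.const ()) a) ∨
      ∃ t1 t2 : CL Unit, CLSub (.app (.app (.const ()) t1) t2) t := by
  induction t with
  | const c => simp [evalO] at h
  | app u v ihu ihv =>
    simp only [evalO, Option.bind_eq_some_iff] at h
    obtain ⟨a, ha, b, hb, hab⟩ := h
    fin_cases a
    · left; exact ⟨v, by rw [eval_zero_const u ha]⟩
    · right
      rcases ihu ha with ⟨c, rfl⟩ | ⟨t1, t2, hsub⟩
      · exact ⟨c, v, CLSub.refl _⟩
      · exact ⟨t1, t2, CLSub.left v hsub⟩

/-- Every ground `O`-term with undefined interpretation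
contains an Owl-redex, i.e. a subterm of the form `@(@(O,t₁),t₂)`. -/
theorem undefined_owl_term_contains_redex :
    ∀ t : CL Unit, evalO t = none →
      ∃ t1 t2 : CL Unit,
        CLSub (.app (.app (.const ()) t1) t2) t := by
  intro t
  induction t with
  | const c => simp [evalO]
  | app u v ihu ihv =>
    intro h
    simp only [evalO, Option.bind_eq_none_iff] at h
    cases hu : evalO u with
    | none =>
      obtain ⟨t1, t2, hs⟩ := ihu hu
      exact ⟨t1, t2, CLSub.left v hs⟩
    | some a =>
      cases hv : evalO v with
      | none =>
        obtain ⟨t1, t2, hs⟩ := ihv hv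
        exact ⟨t1, t2, CLSub.right u hs⟩
      | some b =>
        have hab := h a hu b hv
        have ha1 : a = 1 := by
          fin_cases a <;> simp_all [appI]
        subst ha1
        rcases eval_one u hu with ⟨c, rfl⟩ | ⟨t1, t2, hs⟩
        · exact ⟨c, v, CLSub.refl _⟩
        · exact ⟨t1, t2, CLSub.left v hs⟩

end Owl
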